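/- Let V be a finite-dimensional complex vector space, let A be a linear endomorphism of V, and let T be a bijective linear endomorphism of V. Then T belongs to Col(A) if and only if for every vector x ∈ V the image T((A)_x) of the cyclic subspace (A)_x under T is an A-invariant subspace of V. -/

import Mathlib

open Submodule

/-- A subspace `M` is invariant under the endomorphism `A`. -/
def InvSub {V : Type*} [AddCommGroup V] [Module ℂ V] (A : V →ₗ[ℂ] V)
    (M : Submodule ℂ V) : Prop :=
  M.map A ≤ M

/-- `T ∈ Col(A)`: `T` is bijective and a subspace is `A`-invariant iff its image
under `T` is `A`-invariant. -/
def Col {V : Type*} [AddCommGroup V] [Module ℂ V] (A T : V →ₗ[ℂ] V) : Prop :=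
  Function.Bijective T ∧ ∀ M : Submodule ℂ V, InvSub A M ↔ InvSub A (M.map T)

/-- The cyclic subspace `(A)_x`, i.e. the span of `{A^n x : n ≥ 0}`. -/
def cyc {V : Type*} [AddCommGroup V] [Module ℂ V] (A : V →ₗ[ℂ] V) (x : V) :
    Submodule ℂ V :=
  Submodule.span ℂ (Set.range fun n : ℕ => (A ^ n) x)

namespace Stmt0Aux

variable {V : Type*} [AddCommGroup V] [Module ℂ V]

lemma pow_succ_apply (A : V →ₗ[ℂ] V) (n : ℕ) (x : V) :
    (A ^ (n + 1)) x = A ((A ^ n) x) := by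
  rw [pow_succ', Module.End.mul_apply]

lemma apow_mem_cyc (A : V →ₗ[ℂ] V) (x : V) (n : ℕ) : (A ^ n) x ∈ cyc A x :=
  subset_span ⟨n, rfl⟩

lemma mem_cyc_self (A : V →ₗ[ℂ] V) (x : V) : x ∈ cyc A x := by
  simpa using apow_mem_cyc A x 0

lemma inv_cyc (A : V →ₗ[ℂ] V) (x : V) : InvSub A (cyc A x) := by
  rw [InvSub, cyc, Submodule.map_span, span_le]
  rintro _ ⟨_, ⟨n, rfl⟩, rfl⟩
  rw [← pow_succ_apply]
  exact apow_mem_cyc A x (n + 1)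

lemma cyc_le_of_mem {A : V →ₗ[ℂ] V} {M : Submodule ℂ V} (hM : InvSub A M) {x : V}
    (hx : x ∈ M) : cyc A x ≤ M := by
  rw [cyc, span_le]
  rintro _ ⟨n, rfl⟩
  induction n with
  | zero => simpa using hx
  | succ n ih =>
    show (A ^ (n + 1)) x ∈ M
    rw [pow_succ_apply]
    exact hM (Submodule.mem_map_of_mem ih)

section FinDim

variable [FiniteDimensional ℂ V]

open Module

lemma indep_iff_le_finrank (A : V →ₗ[ℂ] V) (x : V) (k : ℕ) :
    LinearIndependent ℂ (fun j : Fin k => (A ^ (j : ℕ)) x) ↔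
      k ≤ finrank ℂ (cyc A x) := by
  induction k with
  | zero => simpa using linearIndependent_empty_type
  | succ k ih =>
    constructor
    · intro h
      have hspan : span ℂ (Set.range fun j : Fin (k+1) => (A ^ (j : ℕ)) x) ≤ cyc A x := by
        rw [span_le]; rintro _ ⟨j, rfl⟩; exact apow_mem_cyc A x j
      have := finrank_span_eq_card h
      calc k + 1 = Fintype.card (Fin (k+1)) := by simp
        _ = finrank ℂ (span ℂ (Set.range fun j : Fin (k+1) => (A ^ (j : ℕ)) x)) := this.symm
        _ ≤ finrank ℂ (cyc A x) := Submodule.finrank_mono hspan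
    · intro hk
      by_contra hdep
      -- show finrank cyc A x ≤ k, contradiction
      have hfam : (fun j : Fin (k+1) => (A ^ (j : ℕ)) x) =
          Fin.snoc (fun j : Fin k => (A ^ (j : ℕ)) x) ((A ^ k) x) := by
        funext j
        refine Fin.lastCases ?_ ?_ j
        · simp [Fin.snoc_last]
        · intro i; simp [Fin.snoc_castSucc]
      rw [hfam, linearIndependent_fin_snoc] at hdep
      push_neg at hdep
      set W := span ℂ (Set.range fun j : Fin k => (A ^ (j : ℕ)) x) with hW
      have hcyc_le : cyc A x ≤ W := by
        by_cases hind : LinearIndependent ℂ (fun j : Fin k => (A ^ (j : ℕ)) x)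
        · have hmem : (A ^ k) x ∈ W := hdep hind
          have hWinv : InvSub A W := by
            rw [InvSub, hW, Submodule.map_span, span_le]
            rintro _ ⟨_, ⟨j, rfl⟩, rfl⟩
            rw [← pow_succ_apply]
            rcases lt_or_eq_of_le (Nat.succ_le_of_lt j.isLt) with hj | hj
            · exact subset_span ⟨⟨(j : ℕ) + 1, hj⟩, rfl⟩
            · rw [show ((j:ℕ)+1 : ℕ) = k from hj]; exact hmem
          have hx : x ∈ W := by
            rcases Nat.eq_zero_or_pos k with hk0 | hk0
            · subst hk0
              have : (A ^ 0) x ∈ W := hmem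
              simpa using this
            · have : (A ^ (0:ℕ)) x ∈ W := subset_span ⟨⟨0, hk0⟩, rfl⟩
              simpa using this
          exact cyc_le_of_mem hWinv hx
        · -- first k already dependent: use ih's contrapositive
          exfalso
          exact (not_congr ih).mp hind (le_trans (Nat.le_succ k) hk)
      have : finrank ℂ (cyc A x) ≤ k := by
        calc finrank ℂ (cyc A x) ≤ finrank ℂ W := Submodule.finrank_mono hcyc_le
          _ ≤ k := by
            simpa [Set.finrank] using finrank_range_le_card (R := ℂ) (b := fun j : Fin k => (A ^ (j : ℕ)) x)
      omega
end FinDim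

lemma exists_dual_family {k : ℕ} {v : Fin k → V} (hv : LinearIndependent ℂ v) :
    ∃ φ : Fin k → (V →ₗ[ℂ] ℂ), ∀ i j, φ i (v j) = if i = j then 1 else 0 := by
  obtain ⟨q, hq⟩ := Submodule.exists_isCompl (span ℂ (Set.range v))
  let π := Submodule.projectionOnto _ q hq
  let B := Module.Basis.span hv
  refine ⟨fun i => (B.coord i).comp π, fun i j => ?_⟩
  have h1 : π (v j) = B j := by
    rw [show v j = ↑(B j) from (congrArg Subtype.val (Module.Basis.span_apply hv j)).symm]
    exact Submodule.projectionOnto_apply_left hq (B j)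
  rw [LinearMap.comp_apply, h1, Module.Basis.coord_apply, Module.Basis.repr_self,
    Finsupp.single_apply]
  simp [eq_comm]

lemma dep_iff_det_zero (A : V →ₗ[ℂ] V) (k : ℕ) (y : V) :
    ¬ LinearIndependent ℂ (fun j : Fin k => (A ^ (j : ℕ)) y) ↔
      ∀ φ : Fin k → (V →ₗ[ℂ] ℂ),
        (Matrix.of fun i j : Fin k => φ i ((A ^ (j : ℕ)) y)).det = 0 := by
  constructor
  · intro hdep φ
    obtain ⟨g, hsum, i0, hi0⟩ := Fintype.not_linearIndependent_iff.mp hdep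
    rw [← Matrix.exists_mulVec_eq_zero_iff]
    refine ⟨g, fun h => hi0 (congrFun h i0), ?_⟩
    funext i
    simp only [Matrix.mulVec, dotProduct, Matrix.of_apply]
    calc ∑ j : Fin k, φ i ((A ^ (j : ℕ)) y) * g j
        = φ i (∑ j : Fin k, g j • (A ^ (j : ℕ)) y) := by
          rw [map_sum]; congr 1; funext j; rw [map_smul, smul_eq_mul, mul_comm]
      _ = 0 := by rw [hsum, map_zero]
  · intro hall hind
    obtain ⟨φ, hφ⟩ := exists_dual_family hind
    have h1 : (Matrix.of fun i j : Fin k => φ i ((A ^ (j : ℕ)) y)) = 1 := by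
      ext i j
      rw [Matrix.of_apply, hφ i j, Matrix.one_apply]
    have := hall φ
    rw [h1, Matrix.det_one] at this
    exact one_ne_zero this

section Poly

open MvPolynomial

variable {n : ℕ} (b : Module.Basis (Fin n) ℂ V)

noncomputable def linP (f : V →ₗ[ℂ] ℂ) : MvPolynomial (Fin n) ℂ :=
  ∑ m, MvPolynomial.C (f (b m)) * MvPolynomial.X m

noncomputable def ev (v : V) : MvPolynomial (Fin n) ℂ →ₐ[ℂ] ℂ :=
  MvPolynomial.aeval (fun i => b.repr v i)

lemma ev_linP (f : V →ₗ[ℂ] ℂ) (v : V) : ev b v (linP b f) = f v := by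
  have h1 : ev b v (linP b f) = ∑ m, f (b m) * b.repr v m := by
    simp [linP, ev]
  rw [h1]
  conv_rhs => rw [← b.sum_repr v]
  rw [map_sum]
  simp [mul_comm]

/-- Substitution along a linear map `S`: `ev v (sigma S p) = ev (S v) p`. -/
noncomputable def sigmaP (S : V →ₗ[ℂ] V) :
    MvPolynomial (Fin n) ℂ →ₐ[ℂ] MvPolynomial (Fin n) ℂ :=
  MvPolynomial.aeval (fun i => linP b ((b.coord i).comp S))

lemma ev_sigmaP (S : V →ₗ[ℂ] V) (v : V) (p : MvPolynomial (Fin n) ℂ) :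
    ev b v (sigmaP b S p) = ev b (S v) p := by
  have h : (ev b v).comp (sigmaP b S) = ev b (S v) := by
    apply MvPolynomial.algHom_ext
    intro i
    rw [AlgHom.comp_apply]
    rw [show sigmaP b S (X i) = linP b ((b.coord i).comp S) from aeval_X _ i]
    rw [ev_linP, LinearMap.comp_apply, Module.Basis.coord_apply]
    rw [show ev b (S v) (X i) = b.repr (S v) i from aeval_X _ i]
  exact congrArg (fun g => g p) h

/-- zero set of a set of polynomials. -/
def zeroSet (P : Set (MvPolynomial (Fin n) ℂ)) : Set V :=
  {v | ∀ p ∈ P, ev b v p = 0}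

/-- vanishing ideal of a set of vectors. -/
noncomputable def vIdeal (W : Set V) : Ideal (MvPolynomial (Fin n) ℂ) where
  carrier := {p | ∀ v ∈ W, ev b v p = 0}
  add_mem' := fun {p q} hp hq v hv => by rw [map_add, hp v hv, hq v hv, add_zero]
  zero_mem' := fun v _ => map_zero _
  smul_mem' := fun c p hp v hv => by
    rw [smul_eq_mul, map_mul, hp v hv, mul_zero]

lemma subset_zeroSet_vIdeal (W : Set V) : W ⊆ zeroSet b (vIdeal b W) :=
  fun v hv p hp => hp v hv

lemma zeroSet_vIdeal_eq {W : Set V} {P : Set (MvPolynomial (Fin n) ℂ)}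
    (h : W = zeroSet b P) : zeroSet b (vIdeal b W) = W := by
  refine subset_antisymm ?_ (subset_zeroSet_vIdeal b W)
  intro v hv
  rw [h]
  intro p hp
  exact hv p (fun w hw => by rw [h] at hw; exact hw p hp)

lemma vIdeal_antitone {W W' : Set V} (h : W ⊆ W') : vIdeal b W' ≤ vIdeal b W :=
  fun p hp v hv => hp v (h hv)

lemma image_zeroSet (S : V →ₗ[ℂ] V) (hS : Function.Bijective S)
    (P : Set (MvPolynomial (Fin n) ℂ)) :
    S '' zeroSet b P =
      zeroSet b ((sigmaP b (LinearEquiv.ofBijective S hS).symm.toLinearMap) '' P) := by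
  set Sinv := (LinearEquiv.ofBijective S hS).symm.toLinearMap
  have hSinv : ∀ v : V, S (Sinv v) = v := fun v =>
    (LinearEquiv.ofBijective S hS).apply_symm_apply v
  have hSinv' : ∀ v : V, Sinv (S v) = v := fun v =>
    (LinearEquiv.ofBijective S hS).symm_apply_apply v
  ext v
  constructor
  · rintro ⟨u, hu, rfl⟩
    rintro _ ⟨p, hp, rfl⟩
    rw [ev_sigmaP, hSinv']
    exact hu p hp
  · intro hv
    refine ⟨Sinv v, fun p hp => ?_, hSinv v⟩
    have := hv _ ⟨p, hp, rfl⟩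
    rwa [ev_sigmaP] at this
end Poly

section Noeth

open MvPolynomial

variable {n : ℕ} (b : Module.Basis (Fin n) ℂ V)

lemma image_eq_of_image_subset (S : V →ₗ[ℂ] V) (hS : Function.Bijective S)
    (Z : Set V) (hZ : ∃ P : Set (MvPolynomial (Fin n) ℂ), Z = zeroSet b P)
    (h : S '' Z ⊆ Z) : S '' Z = Z := by
  let g : ℕ → Set V := fun i => (Set.image S)^[i] Z
  have hg0 : g 0 = Z := rfl
  have hgsucc : ∀ i, g (i + 1) = S '' g i := fun i =>
    Function.iterate_succ_apply' (Set.image S) i Z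
  have hgalg : ∀ i, ∃ P : Set (MvPolynomial (Fin n) ℂ), g i = zeroSet b P := by
    intro i
    induction i with
    | zero => exact hZ
    | succ i ih =>
      obtain ⟨P, hP⟩ := ih
      exact ⟨_, by rw [hgsucc, hP, image_zeroSet b S hS]⟩
  have hdesc : ∀ i, g (i + 1) ⊆ g i := by
    intro i
    induction i with
    | zero => rw [hgsucc, hg0]; exact h
    | succ i ih =>
      have h2 : S '' g (i + 1) ⊆ S '' g i := Set.image_mono ih
      rwa [← hgsucc (i + 1), ← hgsucc i] at h2
  have hmono : Monotone fun i => vIdeal b (g i) := by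
    apply monotone_nat_of_le_succ
    intro i
    exact vIdeal_antitone b (hdesc i)
  haveI : IsNoetherianRing (MvPolynomial (Fin n) ℂ) := inferInstance
  obtain ⟨i, hi⟩ :=
    monotone_stabilizes_iff_noetherian.mpr (isNoetherianRing_iff.mp this)
      ⟨fun i => vIdeal b (g i), hmono⟩
  have hstab : vIdeal b (g i) = vIdeal b (g (i + 1)) := hi (i + 1) (Nat.le_succ i)
  have h1 : g i = g (i + 1) := by
    obtain ⟨P, hP⟩ := hgalg i
    obtain ⟨P', hP'⟩ := hgalg (i + 1)
    calc g i = zeroSet b (vIdeal b (g i)) := (zeroSet_vIdeal_eq b hP).symm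
      _ = zeroSet b (vIdeal b (g (i + 1))) := by rw [hstab]
      _ = g (i + 1) := zeroSet_vIdeal_eq b hP'
  have key : ∀ j, S '' g j = g j → S '' Z = Z := by
    intro j
    induction j with
    | zero => rw [hg0]; exact id
    | succ j ih =>
      intro hj
      rw [hgsucc] at hj
      exact ih (Set.image_injective.mpr hS.injective hj)
  exact key i (by rw [← hgsucc, ← h1])

end Noeth

section Det

open MvPolynomial

variable {n : ℕ} (b : Module.Basis (Fin n) ℂ V)

noncomputable def detP (A : V →ₗ[ℂ] V) (k : ℕ) (φ : Fin k → (V →ₗ[ℂ] ℂ)) :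
    MvPolynomial (Fin n) ℂ :=
  (Matrix.of fun i j : Fin k => linP b ((φ i).comp (A ^ (j : ℕ)))).det

lemma ev_detP (A : V →ₗ[ℂ] V) (k : ℕ) (φ : Fin k → (V →ₗ[ℂ] ℂ)) (v : V) :
    ev b v (detP b A k φ) =
      (Matrix.of fun i j : Fin k => φ i ((A ^ (j : ℕ)) v)).det := by
  have h := RingHom.map_det (ev b v : MvPolynomial (Fin n) ℂ →+* ℂ)
    (Matrix.of fun i j : Fin k => linP b ((φ i).comp (A ^ (j : ℕ))))
  rw [detP]
  rw [show ((ev b v : MvPolynomial (Fin n) ℂ →+* ℂ) :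
    MvPolynomial (Fin n) ℂ → ℂ) = ev b v from rfl] at h
  rw [h]
  congr 1
  ext i j
  simp only [RingHom.mapMatrix_apply, Matrix.map_apply, Matrix.of_apply]
  rw [show ((ev b v : MvPolynomial (Fin n) ℂ →+* ℂ) :
    MvPolynomial (Fin n) ℂ → ℂ) = ev b v from rfl]
  rw [ev_linP, LinearMap.comp_apply]

lemma Zk_eq (A : V →ₗ[ℂ] V) (k : ℕ) :
    {y : V | ¬ LinearIndependent ℂ (fun j : Fin k => (A ^ (j : ℕ)) y)} =
      zeroSet b (Set.range (detP b A k)) := by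
  ext y
  rw [Set.mem_setOf_eq, dep_iff_det_zero]
  constructor
  · rintro h _ ⟨φ, rfl⟩
    rw [ev_detP]
    exact h φ
  · intro h φ
    have := h _ ⟨φ, rfl⟩
    rwa [ev_detP] at this

end Det

section Key

open Module

variable [FiniteDimensional ℂ V]

lemma finrank_map_eq' (T : V →ₗ[ℂ] V) (hT : Function.Bijective T)
    (p : Submodule ℂ V) : finrank ℂ (p.map T) = finrank ℂ p := by
  have h : (LinearEquiv.ofBijective T hT : V →ₗ[ℂ] V) = T := rfl
  rw [← h]
  exact LinearEquiv.finrank_map_eq (LinearEquiv.ofBijective T hT) p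

lemma key_lemma (A T : V →ₗ[ℂ] V) (hT : Function.Bijective T)
    (H : ∀ x : V, InvSub A ((cyc A x).map T)) (x : V) :
    (cyc A x).map T = cyc A (T x) := by
  have hle : ∀ y : V, cyc A (T y) ≤ (cyc A y).map T := fun y =>
    cyc_le_of_mem (H y) ⟨y, mem_cyc_self A y, rfl⟩
  have hdrop : ∀ y : V, finrank ℂ (cyc A (T y)) ≤ finrank ℂ (cyc A y) := by
    intro y
    have := Submodule.finrank_mono (hle y)
    rwa [finrank_map_eq' T hT] at this
  set k := finrank ℂ (cyc A x) with hk
  set Z : Set V :=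
    {y : V | ¬ LinearIndependent ℂ (fun j : Fin k => (A ^ (j : ℕ)) y)} with hZdef
  have hZmem : ∀ y : V, y ∈ Z ↔ finrank ℂ (cyc A y) < k := by
    intro y
    rw [hZdef, Set.mem_setOf_eq, indep_iff_le_finrank, not_le]
  have hTZ : T '' Z ⊆ Z := by
    rintro _ ⟨y, hy, rfl⟩
    rw [hZmem] at hy ⊢
    exact lt_of_le_of_lt (hdrop y) hy
  let b := Module.finBasis ℂ V
  have hTZeq : T '' Z = Z :=
    image_eq_of_image_subset b T hT Z ⟨_, Zk_eq b A k⟩ hTZ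
  have hxZ : x ∉ Z := by rw [hZmem]; omega
  have hTxZ : T x ∉ Z := by
    intro hTx
    rw [← hTZeq] at hTx
    obtain ⟨u, hu, huT⟩ := hTx
    rw [hT.injective huT] at hu
    exact hxZ hu
  have hge : k ≤ finrank ℂ (cyc A (T x)) := by
    rw [hZmem] at hTxZ
    omega
  refine (Submodule.eq_of_le_of_finrank_le (hle x) ?_).symm
  rw [finrank_map_eq' T hT, ← hk]
  exact hge

end Key

end Stmt0Aux

theorem stmt0 {V : Type*} [AddCommGroup V] [Module ℂ V] [FiniteDimensional ℂ V]
    (A T : V →ₗ[ℂ] V) (hT : Function.Bijective T) :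
    Col A T ↔ ∀ x : V, InvSub A ((cyc A x).map T) := by
  constructor
  · intro hCol x
    exact (hCol.2 (cyc A x)).mp (Stmt0Aux.inv_cyc A x)
  · intro H
    refine ⟨hT, fun M => ⟨?_, ?_⟩⟩
    · intro hM
      intro z hz
      obtain ⟨w, hw, rfl⟩ := hz
      obtain ⟨m, hm, rfl⟩ := hw
      have h1 : A (T m) ∈ (cyc A m).map T :=
        H m (Submodule.mem_map_of_mem ⟨m, Stmt0Aux.mem_cyc_self A m, rfl⟩)
      exact Submodule.map_mono (Stmt0Aux.cyc_le_of_mem hM hm) h1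
    · intro hTM
      intro z hz
      obtain ⟨m, hm, rfl⟩ := hz
      have hAm : A m ∈ cyc A m :=
        Stmt0Aux.inv_cyc A m
          (Submodule.mem_map_of_mem (Stmt0Aux.mem_cyc_self A m))
      have h1 : T (A m) ∈ (cyc A m).map T := ⟨A m, hAm, rfl⟩
      rw [Stmt0Aux.key_lemma A T hT H m] at h1
      have h2 : cyc A (T m) ≤ M.map T :=
        Stmt0Aux.cyc_le_of_mem hTM ⟨m, hm, rfl⟩
      obtain ⟨m', hm', hTm'⟩ := h2 h1
      rw [← hT.injective hTm']
      exact hm'
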